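/- Let T ≥ 1 and let ψ₁, …, ψ_T be unit vectors in a complex inner product space. Then the real part of ∑_{π ∈ S_T} ∏_{t=1}^{T} ⟨ψ_t, ψ_{π(t)}⟩ is at least 1, where S_T denotes the group of permutations of {1,…,T} and ⟨·,·⟩ is the Hermitian inner product. (This sum equals ∑_{π ∈ S_T} Tr(Perm(π) · |ψ₁⟩⟨ψ₁| ⊗ ⋯ ⊗ |ψ_T⟩⟨ψ_T|), i.e., T! times the squared norm of the projection of ψ₁ ⊗ ⋯ ⊗ ψ_T onto the symmetric subspace, up to normalization.) -/

import Mathlib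

open Finset

namespace PermIneq
open Equiv

noncomputable def dot {d : ℕ} (a b : Fin d → ℂ) : ℂ := ∑ i, (starRingEnd ℂ) (a i) * b i

lemma dot_comm {d : ℕ} (a b : Fin d → ℂ) : dot a b = (starRingEnd ℂ) (dot b a) := by
  simp [dot, map_sum, mul_comm]

/-- the permutation of `Fin (m+1)` sending `j ↦ k` and `j.succAbove s ↦ k.succAbove (π s)`. -/
def lift {m : ℕ} (j k : Fin (m+1)) (π : Perm (Fin m)) : Perm (Fin (m+1)) :=
  (finSuccEquiv' j).trans ((Equiv.optionCongr π).trans (finSuccEquiv' k).symm)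

@[simp] lemma lift_self {m : ℕ} (j k : Fin (m+1)) (π : Perm (Fin m)) : lift j k π j = k := by
  simp [lift, finSuccEquiv'_at]

@[simp] lemma lift_succAbove {m : ℕ} (j k : Fin (m+1)) (π : Perm (Fin m)) (s : Fin m) :
    lift j k π (j.succAbove s) = k.succAbove (π s) := by
  simp [lift, finSuccEquiv'_succAbove, finSuccEquiv'_symm_some]

lemma lift_bij_target {m : ℕ} :
    Function.Bijective (fun p : Fin (m+1) × Perm (Fin m) => lift p.1 0 p.2) := by
  rw [Fintype.bijective_iff_injective_and_card]
  constructor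
  · rintro ⟨j, ρ⟩ ⟨j', ρ'⟩ h
    simp only at h
    have hj : j = j' := by
      have h1 : lift j 0 ρ j = 0 := lift_self _ _ _
      have h2 : lift j 0 ρ j' = 0 := by rw [h]; exact lift_self _ _ _
      exact (lift j 0 ρ).injective (h1.trans h2.symm)
    subst hj
    refine Prod.ext rfl ?_
    ext s
    have := congrArg (fun σ : Perm (Fin (m+1)) => σ (j.succAbove s)) h
    simp only [lift_succAbove] at this

    exact congrArg Fin.val (Fin.succAbove_right_injective this)
  · simp [Fintype.card_perm, Nat.factorial_succ, mul_comm]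

lemma lift_bij_source {m : ℕ} (j : Fin (m+1)) :
    Function.Bijective (fun p : Fin (m+1) × Perm (Fin m) => lift j p.1 p.2) := by
  rw [Fintype.bijective_iff_injective_and_card]
  constructor
  · rintro ⟨k, ρ⟩ ⟨k', ρ'⟩ h
    simp only at h
    have hk : k = k' := by
      have h1 : lift j k ρ j = k := lift_self _ _ _
      rw [h, lift_self] at h1; exact h1.symm
    subst hk
    refine Prod.ext rfl ?_
    ext s
    have := congrArg (fun σ : Perm (Fin (m+1)) => σ (j.succAbove s)) h
    simp only [lift_succAbove] at this

    exact congrArg Fin.val (Fin.succAbove_right_injective this)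
  · simp [Fintype.card_perm, Nat.factorial_succ, mul_comm]


lemma tensorA {m d : ℕ} (a b : Fin m → Fin d → ℂ) :
    ∑ F : Fin m → Fin d, (∏ s, (starRingEnd ℂ) (a s (F s))) * ∏ s, b s (F s)
      = ∏ s, dot (a s) (b s) := by
  simp only [dot, ← Finset.prod_mul_distrib]
  exact (Fintype.prod_sum fun s i => (starRingEnd ℂ) (a s i) * b s i).symm

lemma reindexB {m : ℕ} (g : Fin m → Fin m → ℂ) :
    ∑ τ : Perm (Fin m), ∑ ρ : Perm (Fin m), ∏ s, g (τ s) (ρ s)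
      = (m.factorial : ℂ) * ∑ π : Perm (Fin m), ∏ s, g s (π s) := by
  have h1 : ∀ τ : Perm (Fin m), (∑ ρ : Perm (Fin m), ∏ s, g (τ s) (ρ s))
      = ∑ π : Perm (Fin m), ∏ s, g s (π s) := by
    intro τ
    rw [← Equiv.sum_comp (Equiv.mulRight τ) (fun ρ => ∏ s, g (τ s) (ρ s))]
    refine Finset.sum_congr rfl fun π _ => ?_
    rw [← Equiv.prod_comp τ (fun x => g x (π x))]
    simp [Equiv.Perm.mul_apply]
  simp_rw [h1]
  rw [Finset.sum_const, Finset.card_univ, Fintype.card_perm, Fintype.card_fin, nsmul_eq_mul]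

lemma key_pos {d m : ℕ} (v : Fin (m+1) → Fin d → ℂ) (c : Fin (m+1) → ℂ) :
    0 ≤ (∑ k, ∑ j, ∑ ρ : Perm (Fin m),
        (starRingEnd ℂ) (c j) * c k *
          ∏ s, dot (v (j.succAbove s)) (v (k.succAbove (ρ s)))).re := by
  classical
  set G : (Fin m → Fin d) → ℂ :=
    fun F => ∑ j, c j * ∑ τ : Perm (Fin m), ∏ s, v (j.succAbove (τ s)) (F s) with hG
  have expand : ∀ F : Fin m → Fin d, (starRingEnd ℂ) (G F) * G F
      = ∑ j, ∑ k, ∑ τ : Perm (Fin m), ∑ ρ : Perm (Fin m),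
          (starRingEnd ℂ) (c j) * c k *
            ((∏ s, (starRingEnd ℂ) (v (j.succAbove (τ s)) (F s))) *
              ∏ s, v (k.succAbove (ρ s)) (F s)) := by
    intro F
    rw [hG]
    simp only [map_sum, map_mul, map_prod]
    rw [Finset.sum_mul_sum]
    refine Finset.sum_congr rfl fun j _ => Finset.sum_congr rfl fun k _ => ?_
    rw [mul_mul_mul_comm, Finset.sum_mul_sum]
    simp_rw [Finset.mul_sum]
  have step1 : (∑ F, (starRingEnd ℂ) (G F) * G F)
      = ∑ j, ∑ k, ∑ τ : Perm (Fin m), ∑ ρ : Perm (Fin m),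
          (starRingEnd ℂ) (c j) * c k *
            ∏ s, dot (v (j.succAbove (τ s))) (v (k.succAbove (ρ s))) := by
    simp_rw [expand]
    rw [Finset.sum_comm]
    refine Finset.sum_congr rfl fun j _ => ?_
    rw [Finset.sum_comm]
    refine Finset.sum_congr rfl fun k _ => ?_
    rw [Finset.sum_comm]
    refine Finset.sum_congr rfl fun τ _ => ?_
    rw [Finset.sum_comm]
    refine Finset.sum_congr rfl fun ρ _ => ?_
    rw [← Finset.mul_sum, tensorA (fun s => v (j.succAbove (τ s))) (fun s => v (k.succAbove (ρ s)))]
  have step2 : (∑ F, (starRingEnd ℂ) (G F) * G F)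
      = (m.factorial : ℂ) * ∑ k, ∑ j, ∑ ρ : Perm (Fin m),
          (starRingEnd ℂ) (c j) * c k *
            ∏ s, dot (v (j.succAbove s)) (v (k.succAbove (ρ s))) := by
    rw [step1]
    rw [Finset.mul_sum, Finset.sum_comm]
    refine Finset.sum_congr rfl fun k _ => ?_
    rw [Finset.mul_sum]
    refine Finset.sum_congr rfl fun j _ => ?_
    have := reindexB (fun x y => dot (v (j.succAbove x)) (v (k.succAbove y)))
    calc ∑ τ : Perm (Fin m), ∑ ρ : Perm (Fin m),
            (starRingEnd ℂ) (c j) * c k *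
              ∏ s, dot (v (j.succAbove (τ s))) (v (k.succAbove (ρ s)))
        = (starRingEnd ℂ) (c j) * c k *
            ∑ τ : Perm (Fin m), ∑ ρ : Perm (Fin m),
              ∏ s, dot (v (j.succAbove (τ s))) (v (k.succAbove (ρ s))) := by
          simp_rw [Finset.mul_sum]
      _ = (starRingEnd ℂ) (c j) * c k *
            ((m.factorial : ℂ) * ∑ π : Perm (Fin m),
              ∏ s, dot (v (j.succAbove s)) (v (k.succAbove (π s)))) := by rw [this]
      _ = (m.factorial : ℂ) * ∑ ρ : Perm (Fin m),
            (starRingEnd ℂ) (c j) * c k *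
              ∏ s, dot (v (j.succAbove s)) (v (k.succAbove (ρ s))) := by
          rw [Finset.mul_sum]
          simp_rw [Finset.mul_sum]
          refine Finset.sum_congr rfl fun ρ _ => ?_
          ring
  have pos : 0 ≤ (∑ F, (starRingEnd ℂ) (G F) * G F).re := by
    rw [Complex.re_sum]
    refine Finset.sum_nonneg fun F _ => ?_
    rw [mul_comm, Complex.mul_conj]
    simp [Complex.normSq_nonneg]
  rw [step2, show ((m.factorial : ℂ)) = ((m.factorial : ℝ) : ℂ) from by norm_cast,
    Complex.re_ofReal_mul] at pos
  have hf : (0:ℝ) < (m.factorial : ℝ) := by positivity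
  exact le_of_mul_le_mul_left (by simpa using pos) hf

lemma main_euclid {d : ℕ} (n : ℕ) (w : Fin n → Fin d → ℂ)
    (hw : ∀ t, dot (w t) (w t) = 1) :
    1 ≤ (∑ π : Perm (Fin n), ∏ t, dot (w t) (w (π t))).re := by
  induction n with
  | zero => simp
  | succ n ih =>
    have hsum : (∑ π : Perm (Fin (n+1)), ∏ t, dot (w t) (w (π t)))
        = ∑ k, ∑ π : Perm (Fin n),
            dot (w 0) (w k) * ∏ x, dot (w x.succ) (w (k.succAbove (π x))) := by
      have hcompat : ∀ p : Fin (n+1) × Perm (Fin n),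
          (fun p : Fin (n+1) × Perm (Fin n) =>
            dot (w 0) (w p.1) * ∏ x, dot (w x.succ) (w (p.1.succAbove (p.2 x)))) p
          = (fun σ => ∏ t, dot (w t) (w (σ t))) (lift 0 p.1 p.2) := ?_
      · have hbij := Fintype.sum_bijective _ (lift_bij_source (0 : Fin (n+1)))
          (fun p : Fin (n+1) × Perm (Fin n) =>
            dot (w 0) (w p.1) * ∏ x, dot (w x.succ) (w (p.1.succAbove (p.2 x))))
          (fun σ => ∏ t, dot (w t) (w (σ t))) hcompat
        rw [← hbij, Fintype.sum_prod_type]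
      rintro ⟨k, π⟩
      simp only
      rw [Fin.prod_univ_succ, lift_self]
      congr 1
    rw [hsum, Fin.sum_univ_succ]
    have h0 : (∑ π : Perm (Fin n),
        dot (w 0) (w 0) * ∏ x, dot (w x.succ) (w ((0 : Fin (n+1)).succAbove (π x))))
        = ∑ π : Perm (Fin n), ∏ x, dot (w x.succ) (w ((π x).succ)) := by
      refine Finset.sum_congr rfl fun π _ => ?_
      rw [hw 0, one_mul]
      refine Finset.prod_congr rfl fun x _ => ?_
      rw [Fin.zero_succAbove]
    rw [h0, Complex.add_re]
    have h1 : 1 ≤ (∑ π : Perm (Fin n), ∏ x, dot (w x.succ) (w ((π x).succ))).re :=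
      ih (fun x => w x.succ) (fun x => hw x.succ)
    have h2 : 0 ≤ (∑ q : Fin n, ∑ π : Perm (Fin n),
        dot (w 0) (w q.succ) * ∏ x, dot (w x.succ) (w (q.succ.succAbove (π x)))).re := by
      clear hsum h0 h1 ih
      cases n with
      | zero => simp
      | succ m =>
        set v : Fin (m+1) → Fin d → ℂ := fun x => w x.succ with hv
        set c : Fin (m+1) → ℂ := fun x => dot (w 0) (v x) with hc
        have hQ : (∑ q : Fin (m+1), ∑ π : Perm (Fin (m+1)),
            dot (w 0) (w q.succ) * ∏ x, dot (w x.succ) (w (q.succ.succAbove (π x))))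
            = ∑ q, ∑ j, ∑ ρ : Perm (Fin m),
                (starRingEnd ℂ) (c j) * c q *
                  ∏ s, dot (v (j.succAbove s)) (v (q.succAbove (ρ s))) := by
          refine Finset.sum_congr rfl fun q _ => ?_
          have hcompat : ∀ p : Fin (m+1) × Perm (Fin m),
              (fun p : Fin (m+1) × Perm (Fin m) =>
                (starRingEnd ℂ) (c p.1) * c q *
                  ∏ s, dot (v (p.1.succAbove s)) (v (q.succAbove (p.2 s)))) p
              = (fun π => dot (w 0) (w q.succ) *
                  ∏ x, dot (w x.succ) (w (q.succ.succAbove (π x)))) (lift p.1 0 p.2) := ?_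
          · have hbij := Fintype.sum_bijective _ (lift_bij_target (m := m))
              (fun p : Fin (m+1) × Perm (Fin m) =>
                (starRingEnd ℂ) (c p.1) * c q *
                  ∏ s, dot (v (p.1.succAbove s)) (v (q.succAbove (p.2 s))))
              (fun π => dot (w 0) (w q.succ) *
                ∏ x, dot (w x.succ) (w (q.succ.succAbove (π x)))) hcompat
            rw [← hbij, Fintype.sum_prod_type]
          rintro ⟨j, ρ⟩
          simp only
          rw [Fin.prod_univ_succAbove
            (fun x => dot (w x.succ) (w (q.succ.succAbove ((lift j 0 ρ) x)))) j]
          rw [lift_self]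
          have e1 : q.succ.succAbove (0 : Fin (m+1)) = 0 := Fin.succ_succAbove_zero q
          rw [e1]
          have e2 : ∀ s : Fin m, dot (w (j.succAbove s).succ)
              (w (q.succ.succAbove ((lift j 0 ρ) (j.succAbove s))))
              = dot (v (j.succAbove s)) (v (q.succAbove (ρ s))) := by
            intro s
            rw [lift_succAbove, Fin.zero_succAbove, Fin.succ_succAbove_succ]
          simp_rw [e2]
          have e3 : dot (w j.succ) (w 0) = (starRingEnd ℂ) (c j) := by
            rw [hc]; exact dot_comm _ _
          rw [e3]
          ring
        rw [hQ]
        exact key_pos v c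
    linarith
end PermIneq


open PermIneq in
/-- For any `T ≥ 1` unit vectors `ψ₁, …, ψ_T` in a complex inner
product space, `Re (∑_{π ∈ S_T} ∏_t ⟨ψ_t, ψ_{π t}⟩) ≥ 1`. -/
theorem sum_perm_inner_products_ge_one
    {E : Type*} [NormedAddCommGroup E] [InnerProductSpace ℂ E]
    (T : ℕ) (hT : 1 ≤ T) (ψ : Fin T → E) (hψ : ∀ t, ‖ψ t‖ = 1) :
    1 ≤ (∑ π : Equiv.Perm (Fin T), ∏ t, (inner ℂ (ψ t) (ψ (π t)) : ℂ)).re := by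
  classical
  set K : Submodule ℂ E := Submodule.span ℂ (Set.range ψ) with hK
  haveI : FiniteDimensional ℂ K := FiniteDimensional.span_of_finite ℂ (Set.finite_range ψ)
  set d : ℕ := Module.finrank ℂ K with hd
  let b : OrthonormalBasis (Fin d) ℂ K := stdOrthonormalBasis ℂ K
  have hmem : ∀ t, ψ t ∈ K := fun t => Submodule.subset_span (Set.mem_range_self t)
  set φ : Fin T → K := fun t => ⟨ψ t, hmem t⟩ with hφ
  set w : Fin T → Fin d → ℂ := fun t => (b.repr (φ t) : EuclideanSpace ℂ (Fin d)) with hw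
  have hdot : ∀ t s, dot (w t) (w s) = (inner ℂ (ψ t) (ψ s) : ℂ) := by
    intro t s
    have h1 : (inner ℂ (b.repr (φ t)) (b.repr (φ s)) : ℂ) = inner ℂ (φ t) (φ s) :=
      b.repr.inner_map_map (φ t) (φ s)
    have h2 : (inner ℂ (φ t) (φ s) : ℂ) = inner ℂ (ψ t) (ψ s) := rfl
    rw [← h2, ← h1]
    rw [PiLp.inner_apply]
    unfold dot
    refine Finset.sum_congr rfl fun i _ => ?_
    simp only [hw, RCLike.inner_apply]
    ring
  have hunit : ∀ t, dot (w t) (w t) = 1 := by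
    intro t
    rw [hdot t t, inner_self_eq_norm_sq_to_K, hψ t]
    norm_num
  have := main_euclid T w hunit
  simpa only [hdot] using this
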